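/- If W is a double occurrence word of length 8 whose interlacement graph is the 4-cycle C4, then the vertices can be labeled v1, v2, v3, v4 so that they appear in this cyclic order on the 4-cycle and W is cyclically equivalent to v1 v4 v2 v1 v3 v2 v4 v3. -/

import Mathlib

open SimpleGraph

/-- Two letters are interlaced in a word if their occurrences alternate. -/
def Interlaced {α : Type} [DecidableEq α] (W : List α) (a b : α) : Prop :=
  W.filter (fun x => x == a || x == b) = [a, b, a, b] ∨
  W.filter (fun x => x == a || x == b) = [b, a, b, a]

/-- The interlacement graph of a word. -/
def interlacementGraph {α : Type} [DecidableEq α] (W : List α) : SimpleGraph α where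
  Adj a b := a ≠ b ∧ (Interlaced W a b ∨ Interlaced W b a)
  symm := ⟨fun a b h => ⟨h.1.symm, h.2.symm⟩⟩
  loopless := ⟨fun a h => h.1 rfl⟩

/-- A double occurrence word: each letter of the alphabet occurs exactly twice. -/
def IsDOW {α : Type} [DecidableEq α] (W : List α) : Prop := ∀ a : α, W.count a = 2

/-- A circle graph: a graph isomorphic to the interlacement graph of a
double occurrence word. -/
def IsCircleGraph {V : Type} (G : SimpleGraph V) : Prop :=
  ∃ (n : ℕ) (W : List (Fin n)), IsDOW W ∧ Nonempty (G ≃g interlacementGraph W)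

/-- Local complementation at a vertex `v`: toggle adjacency inside `N(v)`. -/
def localComplement {V : Type} (G : SimpleGraph V) (v : V) : SimpleGraph V where
  Adj x y := x ≠ y ∧ ((G.Adj v x ∧ G.Adj v y ∧ ¬ G.Adj x y) ∨
    (¬ (G.Adj v x ∧ G.Adj v y) ∧ G.Adj x y))
  symm := by
    refine ⟨?_⟩
    rintro x y ⟨hxy, h | h⟩
    · exact ⟨hxy.symm, Or.inl ⟨h.2.1, h.1, fun hc => h.2.2 hc.symm⟩⟩
    · exact ⟨hxy.symm, Or.inr ⟨fun hc => h.1 ⟨hc.2, hc.1⟩, h.2.symm⟩⟩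
  loopless := ⟨fun x h => h.1 rfl⟩

/-- A split `(V1, X1; V2, X2)` of a graph. -/
def IsSplit {V : Type} (G : SimpleGraph V) (V1 X1 V2 X2 : Set V) : Prop :=
  V1 ∪ V2 = Set.univ ∧ Disjoint V1 V2 ∧ 2 ≤ V1.encard ∧ 2 ≤ V2.encard ∧
  X1 ⊆ V1 ∧ X2 ⊆ V2 ∧ ∀ x ∈ V1, ∀ y ∈ V2, (G.Adj x y ↔ x ∈ X1 ∧ y ∈ X2)

/-- A graph has a split. -/
def HasSplit {V : Type} (G : SimpleGraph V) : Prop :=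
  ∃ V1 X1 V2 X2, IsSplit G V1 X1 V2 X2

/-- Twin vertices: same neighbours outside `{u, v}`. -/
def IsTwinPair {V : Type} (G : SimpleGraph V) (u v : V) : Prop :=
  u ≠ v ∧ G.neighborSet u \ {v} = G.neighborSet v \ {u}

/-- Adjacent twins. -/
def AdjacentTwins {V : Type} (G : SimpleGraph V) (u v : V) : Prop :=
  G.Adj u v ∧ G.neighborSet u \ {v} = G.neighborSet v \ {u}

/-- Nonadjacent twins. -/
def NonadjacentTwins {V : Type} (G : SimpleGraph V) (u v : V) : Prop :=
  u ≠ v ∧ ¬ G.Adj u v ∧ G.neighborSet u = G.neighborSet v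

/-- Delete a vertex: keep the vertex set, remove all edges at `v`. -/
def deleteVertex {V : Type} (G : SimpleGraph V) (v : V) : SimpleGraph V where
  Adj x y := G.Adj x y ∧ x ≠ v ∧ y ≠ v
  symm := ⟨fun x y h => ⟨h.1.symm, h.2.2, h.2.1⟩⟩
  loopless := ⟨fun x h => G.loopless.irrefl x h.1⟩

/-- `v` is a cutpoint of the connected graph `G`. -/
def IsCutpoint {V : Type} (G : SimpleGraph V) (v : V) : Prop :=
  G.Connected ∧ ∃ x y : V, x ≠ v ∧ y ≠ v ∧ ¬ (deleteVertex G v).Reachable x y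

/-- Cyclic equivalence of words: generated by rotations and reversals. -/
inductive CyclicEquiv {β : Type} : List β → List β → Prop
  | refl (l : List β) : CyclicEquiv l l
  | rot (l₁ l₂ : List β) : CyclicEquiv (l₁ ++ l₂) (l₂ ++ l₁)
  | rev (l : List β) : CyclicEquiv l l.reverse
  | symm {l₁ l₂ : List β} : CyclicEquiv l₁ l₂ → CyclicEquiv l₂ l₁
  | trans {l₁ l₂ l₃ : List β} : CyclicEquiv l₁ l₂ → CyclicEquiv l₂ l₃ → CyclicEquiv l₁ l₃

/-- `G` is 3-connected: more than 3 vertices, and removing fewer than 3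
vertices leaves it connected. -/
def ThreeConnected {V : Type} [Fintype V] (G : SimpleGraph V) : Prop :=
  3 < Fintype.card V ∧ ∀ K : Set V, K.ncard < 3 → (G.induce (Kᶜ : Set V)).Connected

/-- The disjoint union of two graphs, joined by a single edge from `a` to `b`. -/
def joinedByEdge {V₁ V₂ : Type} (G₁ : SimpleGraph V₁) (G₂ : SimpleGraph V₂)
    (a : V₁) (b : V₂) : SimpleGraph (V₁ ⊕ V₂) where
  Adj x y :=
    Sum.elim (fun u => Sum.elim (fun w => G₁.Adj u w) (fun w => u = a ∧ w = b) y)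
             (fun u => Sum.elim (fun w => u = b ∧ w = a) (fun w => G₂.Adj u w) y) x
  symm := by
    refine ⟨?_⟩
    rintro (u | u) (w | w) h
    · exact h.symm
    · exact ⟨h.2, h.1⟩
    · exact ⟨h.2, h.1⟩
    · exact h.symm
  loopless := by
    refine ⟨?_⟩
    rintro (u | u) h
    · exact G₁.loopless.irrefl u h
    · exact G₂.loopless.irrefl u h

/-- The 4-cycle on `Fin 4`. -/
def cycle4 : SimpleGraph (Fin 4) := SimpleGraph.fromRel (fun i j => j = i + 1)


/-! ### Auxiliary machinery for `stmt14` -/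

instance {α : Type} [DecidableEq α] (W : List α) (a b : α) : Decidable (Interlaced W a b) :=
  inferInstanceAs (Decidable (_ ∨ _))

instance {α : Type} [DecidableEq α] (W : List α) : DecidableRel (interlacementGraph W).Adj :=
  fun a b => inferInstanceAs (Decidable (a ≠ b ∧ (Interlaced W a b ∨ Interlaced W b a)))

instance : DecidableRel cycle4.Adj :=
  fun a b => inferInstanceAs (Decidable (a ≠ b ∧ (_ ∨ _)))

instance (W : List (Fin 4)) : Decidable (IsDOW W) :=
  inferInstanceAs (Decidable (∀ a : Fin 4, W.count a = 2))

/-- All rotations of `l` and of `l.reverse`. -/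
def rotRev14 {β : Type} (l : List β) : List (List β) :=
  (List.range l.length).map l.rotate ++ (List.range l.length).map l.reverse.rotate

/-- Every vertex has exactly two neighbours in the interlacement graph. -/
def H2of14 (W : List (Fin 4)) : Prop := ∀ x : Fin 4, ∃ y z : Fin 4, y ≠ z ∧
  (interlacementGraph W).Adj x y ∧ (interlacementGraph W).Adj x z ∧
  ∀ w : Fin 4, (interlacementGraph W).Adj x w → w = y ∨ w = z

instance (W : List (Fin 4)) : Decidable (H2of14 W) := by unfold H2of14; infer_instance

/-- Decidable form of the conclusion of `stmt14`. -/
def Concl14 (W : List (Fin 4)) : Prop :=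
  ∃ v0 v1 v2 v3 : Fin 4,
    (v0 ≠ v1 ∧ v0 ≠ v2 ∧ v0 ≠ v3 ∧ v1 ≠ v2 ∧ v1 ≠ v3 ∧ v2 ≠ v3) ∧
    ((interlacementGraph W).Adj v0 v1 ∧ (interlacementGraph W).Adj v1 v2 ∧
     (interlacementGraph W).Adj v2 v3 ∧ (interlacementGraph W).Adj v3 v0) ∧
    [v0, v3, v1, v0, v2, v1, v3, v2] ∈ rotRev14 W

instance (W : List (Fin 4)) : Decidable (Concl14 W) := by unfold Concl14; infer_instance

set_option maxRecDepth 100000 in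
set_option maxHeartbeats 2000000 in
theorem key00of14 : ∀ c d e f g h : Fin 4, IsDOW [0,0,c,d,e,f,g,h] →
    H2of14 [0,0,c,d,e,f,g,h] → Concl14 [0,0,c,d,e,f,g,h] := by
  decide

set_option maxRecDepth 100000 in
set_option maxHeartbeats 2000000 in
theorem key01of14 : ∀ c d e f g h : Fin 4, IsDOW [0,1,c,d,e,f,g,h] →
    H2of14 [0,1,c,d,e,f,g,h] → Concl14 [0,1,c,d,e,f,g,h] := by
  decide

lemma cyc_rotate14 {β : Type} (l : List β) (k : ℕ) (h : k ≤ l.length) :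
    CyclicEquiv l (l.rotate k) := by
  rw [List.rotate_eq_drop_append_take h]
  conv_lhs => rw [← List.take_append_drop k l]
  exact CyclicEquiv.rot _ _

lemma cyc_of_mem_rotRev14 {β : Type} {W T : List β} (h : T ∈ rotRev14 W) : CyclicEquiv W T := by
  rcases List.mem_append.mp h with h | h <;> obtain ⟨k, hk, rfl⟩ := List.mem_map.mp h
  · exact cyc_rotate14 _ _ (List.mem_range.mp hk).le
  · exact (CyclicEquiv.rev W).trans
      (cyc_rotate14 _ _ (by simpa using (List.mem_range.mp hk).le))

lemma CyclicEquiv.map14 {β γ : Type} (f : β → γ) {l₁ l₂ : List β} (h : CyclicEquiv l₁ l₂) :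
    CyclicEquiv (l₁.map f) (l₂.map f) := by
  induction h with
  | refl l => exact .refl _
  | rot l₁ l₂ => rw [List.map_append, List.map_append]; exact .rot _ _
  | rev l => rw [List.map_reverse]; exact .rev _
  | symm _ ih => exact ih.symm
  | trans _ _ ih₁ ih₂ => exact ih₁.trans ih₂

lemma interlaced_map14 (σ : Equiv.Perm (Fin 4)) (W : List (Fin 4)) (a b : Fin 4) :
    Interlaced (W.map σ) (σ a) (σ b) ↔ Interlaced W a b := by
  have h1 : List.filter (fun x => x == σ a || x == σ b) (W.map σ)
      = (List.filter (fun x => x == a || x == b) W).map σ := by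
    have hp : ((fun x => x == σ a || x == σ b) ∘ ⇑σ) = fun x => x == a || x == b := by
      funext x
      simp [Function.comp, σ.injective.beq_eq]
    rw [List.filter_map, hp]
  unfold Interlaced
  rw [h1]
  have h2 : ([σ a, σ b, σ a, σ b] : List (Fin 4)) = [a,b,a,b].map σ := by simp
  have h3 : ([σ b, σ a, σ b, σ a] : List (Fin 4)) = [b,a,b,a].map σ := by simp
  rw [h2, h3, (List.map_injective_iff.mpr σ.injective).eq_iff,
    (List.map_injective_iff.mpr σ.injective).eq_iff]

lemma adj_map14 (σ : Equiv.Perm (Fin 4)) (W : List (Fin 4)) (a b : Fin 4) :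
    (interlacementGraph (W.map σ)).Adj (σ a) (σ b) ↔ (interlacementGraph W).Adj a b := by
  show (σ a ≠ σ b ∧ _) ↔ (a ≠ b ∧ _)
  rw [interlaced_map14, interlaced_map14, σ.injective.ne_iff]

lemma isDOW_map14 (σ : Equiv.Perm (Fin 4)) (W : List (Fin 4)) (hW : IsDOW W) :
    IsDOW (W.map σ) := by
  intro x
  have h := List.count_map_of_injective W σ σ.injective (σ.symm x)
  rw [Equiv.apply_symm_apply] at h
  exact h.trans (hW _)

lemma H2_of_matrix14 (W : List (Fin 4)) (f : Fin 4 → Fin 4) (hfinj : Function.Injective f)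
    (h : ∀ a b, (interlacementGraph W).Adj a b ↔ cycle4.Adj (f a) (f b)) : H2of14 W := by
  have hsurj := (Finite.injective_iff_bijective.mp hfinj).2
  intro x
  have hc4 : ∀ u : Fin 4, ∃ y z : Fin 4, y ≠ z ∧ cycle4.Adj u y ∧ cycle4.Adj u z ∧
      ∀ w : Fin 4, cycle4.Adj u w → w = y ∨ w = z := by decide
  obtain ⟨y', z', hyz, h1, h2, h3⟩ := hc4 (f x)
  obtain ⟨y, rfl⟩ := hsurj y'
  obtain ⟨z, rfl⟩ := hsurj z'
  refine ⟨y, z, fun hh => hyz (by rw [hh]), (h _ _).mpr h1, (h _ _).mpr h2, fun w hw => ?_⟩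
  rcases h3 (f w) ((h _ _).mp hw) with h4 | h4
  · exact Or.inl (hfinj h4)
  · exact Or.inr (hfinj h4)

lemma transfer14 (W : List (Fin 4)) (hW : IsDOW W) (e : interlacementGraph W ≃g cycle4)
    (σ : Equiv.Perm (Fin 4)) : IsDOW (W.map σ) ∧ H2of14 (W.map σ) := by
  refine ⟨isDOW_map14 σ W hW, H2_of_matrix14 _ (fun x => e (σ.symm x))
    (e.toEquiv.injective.comp σ.symm.injective) (fun x y => ?_)⟩
  have h1 := adj_map14 σ W (σ.symm x) (σ.symm y)
  rw [Equiv.apply_symm_apply, Equiv.apply_symm_apply] at h1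
  exact h1.trans e.map_adj_iff.symm

lemma vec_inj14 {v0 v1 v2 v3 : Fin 4} (h01 : v0 ≠ v1) (h02 : v0 ≠ v2) (h03 : v0 ≠ v3)
    (h12 : v1 ≠ v2) (h13 : v1 ≠ v3) (h23 : v2 ≠ v3) :
    Function.Injective ![v0, v1, v2, v3] := by
  intro i j hij
  fin_cases i <;> fin_cases j <;> simp_all

lemma reduce14 (W : List (Fin 4)) (σ : Equiv.Perm (Fin 4)) (hC : Concl14 (W.map σ)) :
    ∃ v : Fin 4 ≃ Fin 4,
      (∀ i : Fin 4, (interlacementGraph W).Adj (v i) (v (i + 1))) ∧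
      CyclicEquiv W [v 0, v 3, v 1, v 0, v 2, v 1, v 3, v 2] := by
  obtain ⟨v0, v1, v2, v3, ⟨h01, h02, h03, h12, h13, h23⟩, ⟨a01, a12, a23, a30⟩, hmem⟩ := hC
  have hadj : ∀ x y : Fin 4, (interlacementGraph (W.map σ)).Adj x y →
      (interlacementGraph W).Adj (σ.symm x) (σ.symm y) := by
    intro x y hxy
    have h1 := adj_map14 σ W (σ.symm x) (σ.symm y)
    rw [Equiv.apply_symm_apply, Equiv.apply_symm_apply] at h1
    exact h1.mp hxy
  have hd : ∀ {x y : Fin 4}, x ≠ y → σ.symm x ≠ σ.symm y :=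
    fun hxy hc => hxy (σ.symm.injective hc)
  have hinj := vec_inj14 (hd h01) (hd h02) (hd h03) (hd h12) (hd h13) (hd h23)
  refine ⟨Equiv.ofBijective _ (Finite.injective_iff_bijective.mp hinj), ?_, ?_⟩
  · intro i
    fin_cases i
    · exact hadj _ _ a01
    · exact hadj _ _ a12
    · exact hadj _ _ a23
    · exact hadj _ _ a30
  · have hc := cyc_of_mem_rotRev14 hmem
    have hc2 := hc.map14 σ.symm
    simp only [List.map_map, Equiv.symm_comp_self, List.map_id, List.map_cons,
      List.map_nil] at hc2
    exact hc2

/-- A double occurrence word whose interlacement graph is a 4-cycle is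
cyclically equivalent to `v₁ v₄ v₂ v₁ v₃ v₂ v₄ v₃` for vertices labeled in
cyclic order. -/
theorem stmt14 (W : List (Fin 4)) (hW : IsDOW W)
    (hI : Nonempty (interlacementGraph W ≃g cycle4)) :
    ∃ v : Fin 4 ≃ Fin 4,
      (∀ i : Fin 4, (interlacementGraph W).Adj (v i) (v (i + 1))) ∧
      CyclicEquiv W [v 0, v 3, v 1, v 0, v 2, v 1, v 3, v 2] := by
  obtain ⟨e⟩ := hI
  have hperm : W.Perm [0,0,1,1,2,2,3,3] :=
    List.perm_iff_count.mpr (fun a => (hW a).trans (by fin_cases a <;> rfl))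
  have hlen : W.length = 8 := hperm.length_eq
  obtain ⟨a, b, c, d, p, q, r, s, rfl⟩ :
      ∃ a b c d p q r s : Fin 4, W = [a, b, c, d, p, q, r, s] := by
    rcases W with _|⟨a, _|⟨b, _|⟨c, _|⟨d, _|⟨p, _|⟨q, _|⟨r, _|⟨s, _|⟨t, u⟩⟩⟩⟩⟩⟩⟩⟩⟩ <;>
      first
        | (exact ⟨a, b, c, d, p, q, r, s, rfl⟩)
        | (exfalso; simp [List.length] at hlen)
        | (exfalso; simp [List.length] at hlen; omega)
  set W := [a, b, c, d, p, q, r, s] with hWdef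
  by_cases hba : b = a
  · set σ : Equiv.Perm (Fin 4) := Equiv.swap 0 a with hσ
    have hσa : σ a = 0 := Equiv.swap_apply_right 0 a
    have hmap : W.map σ = [0, 0, σ c, σ d, σ p, σ q, σ r, σ s] := by
      simp only [hWdef, List.map_cons, List.map_nil, hba, hσa]
    obtain ⟨hcnt, hh2⟩ := transfer14 W hW e σ
    rw [hmap] at hcnt hh2
    apply reduce14 W σ
    rw [hmap]
    exact key00of14 _ _ _ _ _ _ hcnt hh2
  · set b' : Fin 4 := Equiv.swap 0 a b with hb'def
    have hb' : b' ≠ 0 := by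
      intro hc
      exact hba ((Equiv.swap 0 a).injective (hc.trans (Equiv.swap_apply_right 0 a).symm))
    set σ : Equiv.Perm (Fin 4) := (Equiv.swap 0 a).trans (Equiv.swap 1 b') with hσ
    have hσa : σ a = 0 := by
      show Equiv.swap 1 b' (Equiv.swap 0 a a) = 0
      rw [Equiv.swap_apply_right]
      exact Equiv.swap_apply_of_ne_of_ne (by decide) (Ne.symm hb')
    have hσb : σ b = 1 := by
      show Equiv.swap 1 b' (Equiv.swap 0 a b) = 1
      rw [← hb'def, Equiv.swap_apply_right]
    have hmap : W.map σ = [0, 1, σ c, σ d, σ p, σ q, σ r, σ s] := by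
      simp only [hWdef, List.map_cons, List.map_nil, hσa, hσb]
    obtain ⟨hcnt, hh2⟩ := transfer14 W hW e σ
    rw [hmap] at hcnt hh2
    apply reduce14 W σ
    rw [hmap]
    exact key01of14 _ _ _ _ _ _ hcnt hh2
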